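/- Let X and Y be i.i.d. non-negative random variables with an absolutely continuous distribution whose support has infimum 0. If min{X, Y} and |X − Y| are independent, then there exists λ > 0 such that both X and Y have the exponential distribution with distribution function F(x) = 1 − e^{−λx}, x > 0. -/
import Mathlib


open MeasureTheory ProbabilityTheory

namespace FiszProofAux
open Set Filter Topology
open scoped ENNReal



variable (μ : Measure ℝ) [SFinite μ]

lemma measurable_G : Measurable (fun s : ℝ => μ (Set.Ioi s)) :=
  Antitone.measurable (fun _ _ hab => measure_mono (Set.Ioi_subset_Ioi hab))

lemma strip_measurable (s t : ℝ) :
    MeasurableSet {z : ℝ × ℝ | s < z.1 ∧ z.1 + t < z.2} := by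
  apply MeasurableSet.inter
  · exact measurable_fst measurableSet_Ioi
  · exact measurableSet_lt (measurable_fst.add_const t) measurable_snd

lemma prod_strip (s t : ℝ) :
    (μ.prod μ) {z : ℝ × ℝ | s < z.1 ∧ z.1 + t < z.2}
      = ∫⁻ x in Set.Ioi s, μ (Set.Ioi (x + t)) ∂μ := by
  rw [Measure.prod_apply (strip_measurable s t)]
  rw [← lintegral_indicator measurableSet_Ioi _]
  congr 1
  funext x
  by_cases h : s < x
  · have : Prod.mk x ⁻¹' {z : ℝ × ℝ | s < z.1 ∧ z.1 + t < z.2} = Set.Ioi (x + t) := by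
      ext y; simp [h]
    rw [this, Set.indicator_of_mem (Set.mem_Ioi.2 h)]
  · have : Prod.mk x ⁻¹' {z : ℝ × ℝ | s < z.1 ∧ z.1 + t < z.2} = (∅ : Set ℝ) := by
      ext y; simp [h]
    rw [this, Set.indicator_of_notMem (by simpa using h)]
    simp

lemma prod_strip' (s t : ℝ) :
    (μ.prod μ) {z : ℝ × ℝ | s < z.2 ∧ z.2 + t < z.1}
      = ∫⁻ x in Set.Ioi s, μ (Set.Ioi (x + t)) ∂μ := by
  have h1 : {z : ℝ × ℝ | s < z.2 ∧ z.2 + t < z.1}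
      = Prod.swap ⁻¹' {z : ℝ × ℝ | s < z.1 ∧ z.1 + t < z.2} := rfl
  rw [h1, ← Measure.map_apply measurable_swap (strip_measurable s t),
    Measure.prod_swap, prod_strip]


lemma strip_measurable' (s t : ℝ) :
    MeasurableSet {z : ℝ × ℝ | s < z.2 ∧ z.2 + t < z.1} := by
  apply MeasurableSet.inter
  · exact measurable_snd measurableSet_Ioi
  · exact measurableSet_lt (measurable_snd.add_const t) measurable_fst

lemma halfplane_measurable' (t : ℝ) :
    MeasurableSet {z : ℝ × ℝ | z.2 + t < z.1} :=
  measurableSet_lt (measurable_snd.add_const t) measurable_fst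




variable (μ : Measure ℝ) [SFinite μ]

lemma halfplane_measurable (t : ℝ) :
    MeasurableSet {z : ℝ × ℝ | z.1 + t < z.2} :=
  measurableSet_lt (measurable_fst.add_const t) measurable_snd

lemma prod_half (t : ℝ) :
    (μ.prod μ) {z : ℝ × ℝ | z.1 + t < z.2} = ∫⁻ x, μ (Set.Ioi (x + t)) ∂μ := by
  rw [Measure.prod_apply (halfplane_measurable t)]
  rfl

lemma prod_half' (t : ℝ) :
    (μ.prod μ) {z : ℝ × ℝ | z.2 + t < z.1} = ∫⁻ x, μ (Set.Ioi (x + t)) ∂μ := by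
  have h1 : {z : ℝ × ℝ | z.2 + t < z.1} = Prod.swap ⁻¹' {z : ℝ × ℝ | z.1 + t < z.2} := rfl
  rw [h1, ← Measure.map_apply measurable_swap (halfplane_measurable t),
    Measure.prod_swap, prod_half]

lemma range_split (t : ℝ) (ht : 0 ≤ t) :
    {z : ℝ × ℝ | t < |z.1 - z.2|}
      = {z : ℝ × ℝ | z.1 + t < z.2} ∪ {z : ℝ × ℝ | z.2 + t < z.1} := by
  ext z
  simp only [Set.mem_setOf_eq, Set.mem_union, lt_abs]
  constructor
  · rintro (h | h)
    · right; linarith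
    · left; linarith
  · rintro (h | h)
    · right; linarith
    · left; linarith

lemma range_disj (t : ℝ) (ht : 0 ≤ t) :
    Disjoint {z : ℝ × ℝ | z.1 + t < z.2} {z : ℝ × ℝ | z.2 + t < z.1} := by
  rw [Set.disjoint_left]
  rintro z h1 h2
  simp only [Set.mem_setOf_eq] at h1 h2
  linarith

lemma min_split (s t : ℝ) (ht : 0 ≤ t) :
    {z : ℝ × ℝ | s < min z.1 z.2 ∧ t < |z.1 - z.2|}
      = {z : ℝ × ℝ | s < z.2 ∧ z.2 + t < z.1} ∪ {z : ℝ × ℝ | s < z.1 ∧ z.1 + t < z.2} := by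
  ext z
  simp only [Set.mem_setOf_eq, Set.mem_union, lt_min_iff, lt_abs]
  constructor
  · rintro ⟨⟨h1, h2⟩, h3 | h3⟩
    · left; exact ⟨h2, by linarith⟩
    · right; exact ⟨h1, by linarith⟩
  · rintro (⟨h1, h2⟩ | ⟨h1, h2⟩)
    · exact ⟨⟨by linarith, h1⟩, Or.inl (by linarith)⟩
    · exact ⟨⟨h1, by linarith⟩, Or.inr (by linarith)⟩

lemma min_disj (s t : ℝ) (ht : 0 ≤ t) :
    Disjoint {z : ℝ × ℝ | s < z.2 ∧ z.2 + t < z.1} {z : ℝ × ℝ | s < z.1 ∧ z.1 + t < z.2} := by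
  rw [Set.disjoint_left]
  rintro z h1 h2
  simp only [Set.mem_setOf_eq] at h1 h2
  obtain ⟨-, h1⟩ := h1; obtain ⟨-, h2⟩ := h2
  linarith




lemma inv_succ_lt {c : ℝ} (hc : 0 < c) : ∃ n : ℕ, ((n : ℝ) + 1)⁻¹ < c := by
  obtain ⟨n, hn⟩ := exists_nat_gt c⁻¹
  refine ⟨n, ?_⟩
  have h1 : c⁻¹ < (n : ℝ) + 1 := hn.trans (lt_add_one _)
  have h2 : 1 < c * ((n : ℝ) + 1) := by
    have := mul_lt_mul_of_pos_left h1 hc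
    rwa [mul_inv_cancel₀ hc.ne'] at this
  rw [inv_eq_one_div, div_lt_iff₀ (by positivity)]
  linarith

lemma iInter_Ioc (a : ℝ) :
    ⋂ n : ℕ, Set.Ioc (a - ((n : ℝ) + 1)⁻¹) (a + ((n : ℝ) + 1)⁻¹) = {a} := by
  ext x
  simp only [Set.mem_iInter, Set.mem_Ioc, Set.mem_singleton_iff]
  constructor
  · intro h
    have h1 : x ≤ a := by
      by_contra hx
      push_neg at hx
      obtain ⟨n, hn⟩ := inv_succ_lt (sub_pos.2 hx)
      have := (h n).2
      linarith
    have h2 : a ≤ x := by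
      by_contra hx
      push_neg at hx
      obtain ⟨n, hn⟩ := inv_succ_lt (sub_pos.2 hx)
      have := (h n).1
      linarith
    linarith
  · rintro rfl n
    constructor
    · have : (0:ℝ) < ((n : ℝ) + 1)⁻¹ := by positivity
      linarith
    · have : (0:ℝ) < ((n : ℝ) + 1)⁻¹ := by positivity
      linarith

lemma cdf_sub (μ : Measure ℝ) [IsFiniteMeasure μ] {u v : ℝ} (huv : u ≤ v) :
    (μ (Iic v)).toReal - (μ (Iic u)).toReal = (μ (Ioc u v)).toReal := by
  have h : μ (Ioc u v) = μ (Iic v) - μ (Iic u) := by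
    rw [← Iic_sdiff_Iic,
      measure_diff (Iic_subset_Iic.2 huv) measurableSet_Iic.nullMeasurableSet (measure_ne_top μ _)]
  rw [h, ENNReal.toReal_sub_of_le (measure_mono (Iic_subset_Iic.2 huv)) (measure_ne_top μ _)]

lemma cont_cdf (μ : Measure ℝ) [IsFiniteMeasure μ] (hatom : ∀ x : ℝ, μ {x} = 0) :
    Continuous (fun s : ℝ => (μ (Set.Iic s)).toReal) := by
  rw [Metric.continuous_iff]
  intro a ε hε
  have hanti : Antitone (fun n : ℕ => Set.Ioc (a - ((n : ℝ) + 1)⁻¹) (a + ((n : ℝ) + 1)⁻¹)) := by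
    intro n m hnm
    have hpos : (0:ℝ) < (n : ℝ) + 1 := by positivity
    have h1 : ((m : ℝ) + 1)⁻¹ ≤ ((n : ℝ) + 1)⁻¹ := by
      apply inv_anti₀ hpos
      have : (n:ℝ) ≤ m := Nat.cast_le.2 hnm
      linarith
    apply Set.Ioc_subset_Ioc <;> linarith
  have htend : Tendsto (fun n : ℕ => μ (Set.Ioc (a - ((n : ℝ) + 1)⁻¹) (a + ((n : ℝ) + 1)⁻¹)))
      atTop (𝓝 0) := by
    have := tendsto_measure_iInter_atTop
      (μ := μ) (fun n => measurableSet_Ioc.nullMeasurableSet) hanti ⟨0, measure_ne_top μ _⟩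
    rw [iInter_Ioc, hatom a] at this
    exact this
  have hev : ∀ᶠ n : ℕ in atTop,
      μ (Set.Ioc (a - ((n : ℝ) + 1)⁻¹) (a + ((n : ℝ) + 1)⁻¹)) < ENNReal.ofReal ε :=
    htend.eventually_lt_const (ENNReal.ofReal_pos.2 hε)
  obtain ⟨n, hn⟩ := hev.exists
  set δ : ℝ := ((n : ℝ) + 1)⁻¹ with hδ
  have hδpos : 0 < δ := by positivity
  refine ⟨δ, hδpos, ?_⟩
  intro b hb
  rw [Real.dist_eq] at hb
  rw [Real.dist_eq]
  have hlt : (μ (Set.Ioc (a - δ) (a + δ))).toReal < ε := by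
    rw [← ENNReal.lt_ofReal_iff_toReal_lt (measure_ne_top μ _)]
    exact hn
  have habs : |b - a| < δ := hb
  rcases le_total b a with hba | hab
  · have h1 : (μ (Iic b)).toReal ≤ (μ (Iic a)).toReal :=
      ENNReal.toReal_mono (measure_ne_top μ _) (measure_mono (Iic_subset_Iic.2 hba))
    rw [abs_of_nonpos (by linarith)]
    have h2 : (μ (Iic a)).toReal - (μ (Iic b)).toReal = (μ (Ioc b a)).toReal := cdf_sub μ hba
    have h3 : (μ (Ioc b a)).toReal ≤ (μ (Set.Ioc (a - δ) (a + δ))).toReal := by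
      apply ENNReal.toReal_mono (measure_ne_top μ _)
      apply measure_mono
      apply Set.Ioc_subset_Ioc
      · rw [abs_sub_comm] at habs
        have := abs_lt.1 habs
        linarith [this.2]
      · linarith
    linarith
  · have h1 : (μ (Iic a)).toReal ≤ (μ (Iic b)).toReal :=
      ENNReal.toReal_mono (measure_ne_top μ _) (measure_mono (Iic_subset_Iic.2 hab))
    rw [abs_of_nonneg (by linarith)]
    have h2 : (μ (Iic b)).toReal - (μ (Iic a)).toReal = (μ (Ioc a b)).toReal := cdf_sub μ hab
    have h3 : (μ (Ioc a b)).toReal ≤ (μ (Set.Ioc (a - δ) (a + δ))).toReal := by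
      apply ENNReal.toReal_mono (measure_ne_top μ _)
      apply measure_mono
      apply Set.Ioc_subset_Ioc
      · linarith
      · have := abs_lt.1 habs
        linarith [this.2]
    linarith




theorem fisz_aux (μ : Measure ℝ) [IsProbabilityMeasure μ]
    (hac : μ ≪ (volume : Measure ℝ))
    (h0 : μ (Set.Iic 0) = 0)
    (hinf : ∀ ε : ℝ, 0 < ε → 0 < μ (Set.Iio ε))
    (hfe : ∀ s t : ℝ, 0 ≤ t →
      (μ.prod μ) {z : ℝ × ℝ | s < min z.1 z.2 ∧ t < |z.1 - z.2|}
        = μ (Set.Ioi s) * μ (Set.Ioi s) * (μ.prod μ) {z : ℝ × ℝ | t < |z.1 - z.2|}) :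
    ∃ l : ℝ, 0 < l ∧ ∀ x : ℝ, 0 < x →
      μ (Set.Iic x) = ENNReal.ofReal (1 - Real.exp (-l * x)) := by
  have hatom : ∀ x : ℝ, μ {x} = 0 := fun x => hac Real.volume_singleton
  have hGm : Measurable (fun s : ℝ => μ (Set.Ioi s)) := measurable_G μ
  have hGtm : ∀ t : ℝ, Measurable (fun x : ℝ => μ (Set.Ioi (x + t))) :=
    fun t => hGm.comp (measurable_id.add_const t)
  set J : ℝ → ℝ≥0∞ := fun t => ∫⁻ x, μ (Set.Ioi (x + t)) ∂μ with hJdef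
  have hJle : ∀ t, J t ≤ 1 := by
    intro t
    calc ∫⁻ x, μ (Set.Ioi (x + t)) ∂μ ≤ ∫⁻ _, 1 ∂μ := lintegral_mono fun x => prob_le_one
    _ = 1 := by simp
  have hJne : ∀ t, J t ≠ ∞ := fun t => ((hJle t).trans_lt ENNReal.one_lt_top).ne
  have hJ0int : ∫⁻ x, μ (Set.Ioi x) ∂μ = J 0 := by
    rw [hJdef]; simp only [add_zero]
  -- range probability
  have hrange : ∀ t : ℝ, 0 ≤ t →
      (μ.prod μ) {z : ℝ × ℝ | t < |z.1 - z.2|} = 2 * J t := by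
    intro t ht
    rw [range_split t ht, measure_union (range_disj t ht) (halfplane_measurable' t),
      prod_half, prod_half', two_mul]
  -- min/range probability
  have hmin : ∀ s t : ℝ, 0 ≤ t →
      (μ.prod μ) {z : ℝ × ℝ | s < min z.1 z.2 ∧ t < |z.1 - z.2|}
        = 2 * ∫⁻ x in Set.Ioi s, μ (Set.Ioi (x + t)) ∂μ := by
    intro s t ht
    rw [min_split s t ht, measure_union (min_disj s t ht) (strip_measurable s t),
      prod_strip, prod_strip', two_mul]
  -- functional equation for set-integrals
  have hIG : ∀ s t : ℝ, 0 ≤ t →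
      ∫⁻ x in Set.Ioi s, μ (Set.Ioi (x + t)) ∂μ = μ (Set.Ioi s) * μ (Set.Ioi s) * J t := by
    intro s t ht
    have h := hfe s t ht
    rw [hmin s t ht, hrange t ht] at h
    have h2 : (2 : ℝ≥0∞) * ∫⁻ x in Set.Ioi s, μ (Set.Ioi (x + t)) ∂μ
        = 2 * (μ (Set.Ioi s) * μ (Set.Ioi s) * J t) := by
      rw [h]; ring
    exact (ENNReal.mul_right_inj two_ne_zero ENNReal.ofNat_ne_top).mp h2
  have hG0 : μ (Set.Ioi 0) = 1 := by
    have h1 : μ (Set.Ioi 0) = 1 - μ (Set.Iic 0) := by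
      rw [← Set.compl_Iic]
      exact prob_compl_eq_one_sub measurableSet_Iic
    rw [h1, h0]; simp
  have hIooPos : ∀ δ : ℝ, 0 < δ → 0 < μ (Set.Ioo 0 δ) := by
    intro δ hδ
    have h1 := hinf δ hδ
    have h2 : Set.Iio δ ⊆ Set.Iic 0 ∪ Set.Ioo 0 δ := by
      intro x hx
      rcases le_or_gt x 0 with h | h
      · exact Or.inl h
      · exact Or.inr ⟨h, hx⟩
    have h3 : μ (Set.Iio δ) ≤ μ (Set.Iic 0) + μ (Set.Ioo 0 δ) :=
      (measure_mono h2).trans (measure_union_le _ _)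
    rw [h0, zero_add] at h3
    exact h1.trans_le h3
  -- J 0 is positive
  have hJ0pos : J 0 ≠ 0 := by
    have hhalf : ∃ δ : ℝ, 0 < δ ∧ (2 : ℝ≥0∞)⁻¹ ≤ μ (Set.Ioi δ) := by
      have hmono : Monotone (fun n : ℕ => Set.Ioi (((n : ℝ) + 1)⁻¹)) := by
        intro n m hnm
        apply Set.Ioi_subset_Ioi
        apply inv_anti₀ (by positivity)
        have : (n : ℝ) ≤ m := Nat.cast_le.2 hnm
        linarith
      have hU : ⋃ n : ℕ, Set.Ioi (((n : ℝ) + 1)⁻¹) = Set.Ioi (0:ℝ) := by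
        ext x
        simp only [Set.mem_iUnion, Set.mem_Ioi]
        constructor
        · rintro ⟨n, hn⟩
          exact lt_trans (by positivity) hn
        · intro hx
          obtain ⟨n, hn⟩ := exists_nat_gt x⁻¹
          refine ⟨n, ?_⟩
          have h1 : x⁻¹ < (n : ℝ) + 1 := hn.trans (lt_add_one _)
          have h2 : 1 < x * ((n : ℝ) + 1) := by
            have := mul_lt_mul_of_pos_left h1 hx
            rwa [mul_inv_cancel₀ hx.ne'] at this
          rw [inv_eq_one_div, div_lt_iff₀ (by positivity)]
          linarith
      have htd : Tendsto (fun n : ℕ => μ (Set.Ioi (((n : ℝ) + 1)⁻¹))) atTop (𝓝 1) := by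
        have := tendsto_measure_iUnion_atTop (μ := μ) hmono
        rw [hU, hG0] at this
        exact this
      have hev := htd.eventually_const_lt (by norm_num : (2 : ℝ≥0∞)⁻¹ < 1)
      obtain ⟨n, hn⟩ := hev.exists
      exact ⟨((n : ℝ) + 1)⁻¹, by positivity, hn.le⟩
    obtain ⟨δ, hδ, hhalf⟩ := hhalf
    have h1 : (2 : ℝ≥0∞)⁻¹ * μ (Set.Ioo 0 δ) ≤ J 0 := by
      have c1 : (2 : ℝ≥0∞)⁻¹ * μ (Set.Ioo 0 δ) = ∫⁻ _ in Set.Ioo 0 δ, (2 : ℝ≥0∞)⁻¹ ∂μ := by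
        rw [setLIntegral_const, mul_comm]
      have c2 : (∫⁻ _ in Set.Ioo 0 δ, (2 : ℝ≥0∞)⁻¹ ∂μ) ≤ ∫⁻ x in Set.Ioo 0 δ, μ (Set.Ioi x) ∂μ := by
        apply setLIntegral_mono hGm
        intro x hx
        exact hhalf.trans (measure_mono (Set.Ioi_subset_Ioi hx.2.le))
      have c3 : (∫⁻ x in Set.Ioo 0 δ, μ (Set.Ioi x) ∂μ) ≤ ∫⁻ x, μ (Set.Ioi x) ∂μ :=
        setLIntegral_le_lintegral _ _
      rw [c1, hJ0int] at *
      exact (c2.trans c3).trans_eq hJ0int |>.trans_eq rfl |> fun h => by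
        exact le_trans (le_of_eq c1) (c2.trans (c3.trans_eq hJ0int))
    intro hz
    rw [hz] at h1
    have := le_zero_iff.mp h1
    have h2 : (2 : ℝ≥0∞)⁻¹ ≠ 0 := by norm_num
    rcases mul_eq_zero.mp this with h | h
    · exact h2 h
    · exact (hIooPos δ hδ).ne' h
  -- the scalar k
  set k : ℝ → ℝ≥0∞ := fun t => J t / J 0 with hkdef
  have hkne : ∀ t, k t ≠ ∞ := fun t => (ENNReal.div_lt_top (hJne t) hJ0pos).ne
  have hkJ0 : ∀ t, k t * J 0 = J t := fun t => ENNReal.div_mul_cancel hJ0pos (hJne 0)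
  -- measure equality via ext on Iic
  have hmeq : ∀ t : ℝ, 0 ≤ t →
      μ.withDensity (fun x => μ (Set.Ioi (x + t)))
        = μ.withDensity (fun x => k t * μ (Set.Ioi x)) := by
    intro t ht
    have hint2 : ∫⁻ x, k t * μ (Set.Ioi x) ∂μ = J t := by
      rw [lintegral_const_mul _ hGm, hJ0int, hkJ0 t]
    haveI h1 : IsFiniteMeasure (μ.withDensity fun x => μ (Set.Ioi (x + t))) :=
      isFiniteMeasure_withDensity (hJne t)
    haveI h2 : IsFiniteMeasure (μ.withDensity fun x => k t * μ (Set.Ioi x)) :=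
      isFiniteMeasure_withDensity (by rw [hint2]; exact hJne t)
    apply Measure.ext_of_Iic
    intro a
    rw [withDensity_apply _ measurableSet_Iic, withDensity_apply _ measurableSet_Iic]
    have hsplitInt : ∀ f : ℝ → ℝ≥0∞, Measurable f →
        (∫⁻ x in Set.Iic a, f x ∂μ) + (∫⁻ x in Set.Ioi a, f x ∂μ) = ∫⁻ x, f x ∂μ := by
      intro f hf
      rw [← lintegral_union measurableSet_Ioi (Set.Iic_disjoint_Ioi le_rfl),
        Set.Iic_union_Ioi, Measure.restrict_univ]
    have e1 := hsplitInt _ (hGtm t)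
    have e2 := hsplitInt _ (hGm.const_mul (k t))
    have hIoiEq : (∫⁻ x in Set.Ioi a, μ (Set.Ioi (x + t)) ∂μ)
        = ∫⁻ x in Set.Ioi a, k t * μ (Set.Ioi x) ∂μ := by
      rw [lintegral_const_mul _ hGm]
      have hI0 : ∫⁻ x in Set.Ioi a, μ (Set.Ioi x) ∂μ = μ (Set.Ioi a) * μ (Set.Ioi a) * J 0 := by
        have := hIG a 0 le_rfl
        simpa only [add_zero] using this
      rw [hI0, hIG a t ht, ← hkJ0 t]
      ring
    have hc : (∫⁻ x in Set.Ioi a, k t * μ (Set.Ioi x) ∂μ) ≠ ∞ := by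
      refine ((setLIntegral_le_lintegral _ _).trans_eq hint2).trans_lt ?_ |>.ne
      exact (hJne t).lt_top
    have e3 : (∫⁻ x, μ (Set.Ioi (x + t)) ∂μ) = ∫⁻ x, k t * μ (Set.Ioi x) ∂μ := by
      rw [hint2]
    have e4 := e1.trans (e3.trans e2.symm)
    rw [hIoiEq] at e4
    exact (ENNReal.add_left_inj hc).mp e4
  -- a.e. functional equation
  have hae : ∀ t : ℝ, 0 ≤ t →
      (fun x => μ (Set.Ioi (x + t))) =ᵐ[μ] (fun x => k t * μ (Set.Ioi x)) := by
    intro t ht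
    exact (withDensity_eq_iff (hGtm t).aemeasurable
      ((hGm.const_mul (k t))).aemeasurable (hJne t)).mp (hmeq t ht)
  -- real-valued survival function
  set g : ℝ → ℝ := fun s => (μ (Set.Ioi s)).toReal with hgdef
  set F : ℝ → ℝ := fun s => (μ (Set.Iic s)).toReal with hFdef
  have hgF : ∀ s, g s = 1 - F s := by
    intro s
    have h1 : μ (Set.Ioi s) = 1 - μ (Set.Iic s) := by
      rw [← Set.compl_Iic]
      exact prob_compl_eq_one_sub measurableSet_Iic
    show (μ (Set.Ioi s)).toReal = 1 - (μ (Set.Iic s)).toReal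
    rw [h1, ENNReal.toReal_sub_of_le prob_le_one ENNReal.one_ne_top, ENNReal.toReal_one]
  have hFcont : Continuous F := cont_cdf μ hatom
  have hgcont : Continuous g := by
    have : g = fun s => 1 - F s := funext hgF
    rw [this]
    exact continuous_const.sub hFcont
  have hg0 : g 0 = 1 := by
    show (μ (Set.Ioi 0)).toReal = 1
    rw [hG0, ENNReal.toReal_one]
  have hgnonneg : ∀ s, 0 ≤ g s := fun s => ENNReal.toReal_nonneg
  set r : ℝ → ℝ := fun t => (k t).toReal with hrdef
  have haeR : ∀ t : ℝ, 0 ≤ t → ∀ᵐ x ∂μ, g (x + t) = r t * g x := by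
    intro t ht
    filter_upwards [hae t ht] with x hx
    show (μ (Set.Ioi (x + t))).toReal = (k t).toReal * (μ (Set.Ioi x)).toReal
    rw [show μ (Set.Ioi (x + t)) = k t * μ (Set.Ioi x) from hx, ENNReal.toReal_mul]
  have hexists_small : ∀ (t : ℝ), 0 ≤ t → ∀ n : ℕ,
      ∃ x : ℝ, 0 < x ∧ x < ((n : ℝ) + 1)⁻¹ ∧ g (x + t) = r t * g x := by
    intro t ht n
    have hpos := hIooPos (((n : ℝ) + 1)⁻¹) (by positivity)
    have hB : μ {x : ℝ | ¬ g (x + t) = r t * g x} = 0 := ae_iff.mp (haeR t ht)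
    have h2 : μ (Set.Ioo 0 (((n : ℝ) + 1)⁻¹) ∩ {x : ℝ | g (x + t) = r t * g x}) ≠ 0 := by
      intro hz
      have hsub : Set.Ioo 0 (((n : ℝ) + 1)⁻¹)
          ⊆ (Set.Ioo 0 (((n : ℝ) + 1)⁻¹) ∩ {x : ℝ | g (x + t) = r t * g x})
            ∪ {x : ℝ | ¬ g (x + t) = r t * g x} := by
        intro x hx
        by_cases hcase : g (x + t) = r t * g x
        · exact Or.inl ⟨hx, hcase⟩
        · exact Or.inr hcase
      have := (measure_mono (μ := μ) hsub).trans (measure_union_le _ _)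
      rw [hz, hB, add_zero] at this
      exact hpos.ne' (le_zero_iff.mp this)
    obtain ⟨x, hx⟩ := nonempty_of_measure_ne_zero h2
    exact ⟨x, hx.1.1, hx.1.2, hx.2⟩
  have hinv_tendsto : Tendsto (fun n : ℕ => ((n : ℝ) + 1)⁻¹) atTop (𝓝 0) := by
    have h1 : Tendsto (fun n : ℕ => (n : ℝ) + 1) atTop atTop :=
      tendsto_atTop_add_const_right _ 1 tendsto_natCast_atTop_atTop
    exact tendsto_inv_atTop_zero.comp h1
  have hrg : ∀ t : ℝ, 0 ≤ t → r t = g t := by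
    intro t ht
    choose xs h1 h2 h3 using hexists_small t ht
    have hx0 : Tendsto xs atTop (𝓝 0) :=
      squeeze_zero (fun n => (h1 n).le) (fun n => (h2 n).le) hinv_tendsto
    have hlim1 : Tendsto (fun n => g (xs n + t)) atTop (𝓝 (g t)) := by
      have hadd : Tendsto (fun n => xs n + t) atTop (𝓝 (0 + t)) := hx0.add_const t
      rw [zero_add] at hadd
      exact (hgcont.tendsto t).comp hadd
    have hlim2 : Tendsto (fun n => g (xs n + t)) atTop (𝓝 (r t * 1)) := by
      have hh : Tendsto (fun n => r t * g (xs n)) atTop (𝓝 (r t * g 0)) :=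
        tendsto_const_nhds.mul ((hgcont.tendsto 0).comp hx0)
      rw [hg0] at hh
      exact hh.congr fun n => (h3 n).symm
    have := tendsto_nhds_unique hlim1 hlim2
    rw [mul_one] at this
    exact this.symm
  have haeC : ∀ t : ℝ, 0 ≤ t → μ {x : ℝ | ¬ g (x + t) = g t * g x} = 0 := by
    intro t ht
    have := ae_iff.mp (haeR t ht)
    rwa [hrg t ht] at this
  -- support points near zero
  set S : Set ℝ := {a : ℝ | 0 < a ∧ ∀ ε : ℝ, 0 < ε → 0 < μ (Set.Ioo (a - ε) (a + ε))} with hSdef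
  have hSprop : ∀ a ∈ S, ∀ t : ℝ, 0 ≤ t → g (a + t) = g a * g t := by
    intro a ha t ht
    by_contra hne
    have hcont : Continuous fun x : ℝ => g (x + t) - g t * g x :=
      (hgcont.comp (continuous_id.add continuous_const)).sub (continuous_const.mul hgcont)
    have hopen : IsOpen {x : ℝ | g (x + t) - g t * g x ≠ 0} := by
      have hcl : IsClosed {x : ℝ | g (x + t) - g t * g x = 0} :=
        isClosed_eq hcont continuous_const
      have : {x : ℝ | g (x + t) - g t * g x ≠ 0}
          = {x : ℝ | g (x + t) - g t * g x = 0}ᶜ := rfl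
      rw [this]
      exact hcl.isOpen_compl
    have hne' : g (a + t) ≠ g t * g a := fun heq => hne (by rw [heq, mul_comm])
    have hmem : a ∈ {x : ℝ | g (x + t) - g t * g x ≠ 0} := sub_ne_zero.2 hne'
    obtain ⟨ε, hε, hball⟩ := Metric.isOpen_iff.mp hopen a hmem
    have hsubset : Set.Ioo (a - ε) (a + ε) ⊆ {x : ℝ | ¬ g (x + t) = g t * g x} := by
      intro x hx
      have hx2 : x ∈ Metric.ball a ε := by
        rw [Real.ball_eq_Ioo]; exact hx
      have := hball hx2
      exact fun heq => this (sub_eq_zero.2 heq)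
    have hle := measure_mono (μ := μ) hsubset
    rw [haeC t ht] at hle
    exact (ha.2 ε hε).ne' (le_zero_iff.mp hle)
  have hSnear : ∀ δ : ℝ, 0 < δ → ∃ a, a ∈ S ∧ a < δ := by
    intro δ hδ
    by_contra hno
    push_neg at hno
    have hnull : μ (Set.Ioo 0 δ) = 0 := by
      apply measure_null_of_locally_null
      intro x hx
      have hxS : x ∉ S := fun hxS => absurd (hno x hxS) (not_le.2 hx.2)
      rw [hSdef] at hxS
      simp only [Set.mem_setOf_eq, not_and] at hxS
      have hx1 := hxS hx.1
      push_neg at hx1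
      obtain ⟨ε, hε, hzero⟩ := hx1
      refine ⟨Set.Ioo (x - ε) (x + ε), ?_, ?_⟩
      · exact mem_nhdsWithin_of_mem_nhds (Ioo_mem_nhds (by linarith) (by linarith))
      · exact le_zero_iff.mp hzero
    exact (hIooPos δ hδ).ne' hnull
  -- iteration
  have hiter : ∀ a ∈ S, ∀ n : ℕ, ∀ t : ℝ, 0 ≤ t →
      g ((n : ℝ) * a + t) = g a ^ n * g t := by
    intro a ha n
    induction n with
    | zero => intro t ht; simp
    | succ m ih =>
      intro t ht
      have hapos : 0 < a := ha.1
      have harg : (0 : ℝ) ≤ (m : ℝ) * a + t := by positivity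
      have h1 : ((m : ℕ) + 1 : ℕ) • a = a + (m : ℝ) * a := by
        push_cast
        ring
      have hcast : (((m + 1 : ℕ) : ℝ)) * a + t = a + ((m : ℝ) * a + t) := by
        push_cast
        ring
      rw [hcast, hSprop a ha _ harg, ih t ht, pow_succ]
      ring
  -- full Cauchy equation
  have hCauchy : ∀ s t : ℝ, 0 ≤ s → 0 ≤ t → g (s + t) = g s * g t := by
    intro s t hs ht
    rcases eq_or_lt_of_le hs with hs0 | hs0
    · rw [← hs0, zero_add, hg0, one_mul]
    · have hxs : ∀ n : ℕ, ∃ a, a ∈ S ∧ a < ((n : ℝ) + 1)⁻¹ := fun n => hSnear _ (by positivity)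
      choose as hmemS hlt using hxs
      have hapos : ∀ n, 0 < as n := fun n => (hmemS n).1
      set u : ℕ → ℝ := fun n => (Nat.ceil (s / as n) : ℝ) * as n with hu
      have hub : ∀ n, s ≤ u n ∧ u n < s + as n := by
        intro n
        have h1 : 0 < s / as n := div_pos hs0 (hapos n)
        constructor
        · have h2 := Nat.le_ceil (s / as n)
          calc s = (s / as n) * as n := (div_mul_cancel₀ s (hapos n).ne').symm
          _ ≤ (Nat.ceil (s / as n) : ℝ) * as n :=
            mul_le_mul_of_nonneg_right h2 (hapos n).le
        · have h2 := Nat.ceil_lt_add_one h1.le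
          have h3 : (Nat.ceil (s / as n) : ℝ) * as n < (s / as n + 1) * as n :=
            mul_lt_mul_of_pos_right h2 (hapos n)
          have h4 : (s / as n + 1) * as n = s + as n := by
            rw [add_mul, div_mul_cancel₀ _ (hapos n).ne', one_mul]
          have h5 : u n = (Nat.ceil (s / as n) : ℝ) * as n := rfl
          linarith
      have hulim : Tendsto u atTop (𝓝 s) := by
        have hupper : Tendsto (fun n : ℕ => s + ((n : ℝ) + 1)⁻¹) atTop (𝓝 s) := by
          have hh : Tendsto (fun n : ℕ => s + ((n : ℝ) + 1)⁻¹) atTop (𝓝 (s + 0)) :=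
            tendsto_const_nhds.add hinv_tendsto
          rwa [add_zero] at hh
        apply tendsto_of_tendsto_of_tendsto_of_le_of_le
          (tendsto_const_nhds : Tendsto (fun _ : ℕ => s) atTop (𝓝 s)) hupper
        · exact fun n => (hub n).1
        · exact fun n => ((hub n).2.trans_le (by linarith [(hlt n).le])).le
      have hft : Tendsto (fun n => g (u n + t)) atTop (𝓝 (g (s + t))) := by
        have hadd : Tendsto (fun n => u n + t) atTop (𝓝 (s + t)) := hulim.add_const t
        exact (hgcont.tendsto (s + t)).comp hadd
      have heq : ∀ n, g (u n + t) = g (u n) * g t := by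
        intro n
        have h1 := hiter (as n) (hmemS n) (Nat.ceil (s / as n)) t ht
        have h2 := hiter (as n) (hmemS n) (Nat.ceil (s / as n)) 0 le_rfl
        rw [add_zero, hg0, mul_one] at h2
        rw [hu]
        show g ((Nat.ceil (s / as n) : ℝ) * as n + t) = g ((Nat.ceil (s / as n) : ℝ) * as n) * g t
        rw [h1, h2]
      have hft2 : Tendsto (fun n => g (u n + t)) atTop (𝓝 (g s * g t)) := by
        have hh : Tendsto (fun n => g (u n) * g t) atTop (𝓝 (g s * g t)) :=
          (((hgcont.tendsto s).comp hulim).mul_const (g t))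
        exact hh.congr fun n => (heq n).symm
      exact tendsto_nhds_unique hft hft2
  -- positivity of g
  have hgpos : ∀ x : ℝ, 0 ≤ x → 0 < g x := by
    intro x hx
    rcases (hgnonneg x).lt_or_eq with h | h
    · exact h
    · exfalso
      have hzero : ∀ n : ℕ, g (x / 2 ^ n) = 0 := by
        intro n
        induction n with
        | zero => simpa using h.symm
        | succ m ih =>
          have hhalf : x / 2 ^ m = x / 2 ^ (m + 1) + x / 2 ^ (m + 1) := by ring
          have h1 : g (x / 2 ^ m) = g (x / 2 ^ (m + 1)) * g (x / 2 ^ (m + 1)) := by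
            rw [hhalf]
            exact hCauchy _ _ (by positivity) (by positivity)
          rw [ih] at h1
          exact mul_self_eq_zero.mp h1.symm
      have hlim : Tendsto (fun n : ℕ => x / 2 ^ n) atTop (𝓝 0) := by
        have h1 : Tendsto (fun n : ℕ => x * (1 / 2 : ℝ) ^ n) atTop (𝓝 (x * 0)) :=
          tendsto_const_nhds.mul (tendsto_pow_atTop_nhds_zero_of_lt_one (by norm_num) (by norm_num))
        rw [mul_zero] at h1
        refine h1.congr fun n => ?_
        rw [div_pow, one_pow]
        ring
      have h1 : Tendsto (fun n : ℕ => g (x / 2 ^ n)) atTop (𝓝 (g 0)) :=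
        (hgcont.tendsto 0).comp hlim
      rw [hg0] at h1
      have h2 : Tendsto (fun n : ℕ => g (x / 2 ^ n)) atTop (𝓝 0) :=
        tendsto_const_nhds.congr fun n => (hzero n).symm
      exact one_ne_zero (tendsto_nhds_unique h1 h2)
  -- logarithm is additive, hence linear
  set L : ℝ → ℝ := fun x => Real.log (g x) with hLdef
  have hLadd : ∀ s t : ℝ, 0 ≤ s → 0 ≤ t → L (s + t) = L s + L t := by
    intro s t hs ht
    show Real.log (g (s + t)) = Real.log (g s) + Real.log (g t)
    rw [hCauchy s t hs ht, Real.log_mul (hgpos s hs).ne' (hgpos t ht).ne']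
  have hLnat : ∀ n : ℕ, ∀ x : ℝ, 0 ≤ x → L ((n : ℝ) * x) = (n : ℝ) * L x := by
    intro n
    induction n with
    | zero =>
      intro x hx
      have hc : ((0 : ℕ) : ℝ) = 0 := by norm_num
      rw [hc, zero_mul, zero_mul]
      show Real.log (g 0) = 0
      rw [hg0, Real.log_one]
    | succ m ih =>
      intro x hx
      have h1 : ((m + 1 : ℕ) : ℝ) * x = x + (m : ℝ) * x := by push_cast; ring
      rw [h1, hLadd x ((m : ℝ) * x) hx (by positivity), ih x hx]
      push_cast
      ring
  have hLcont : ∀ x : ℝ, 0 ≤ x → ContinuousAt L x := by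
    intro x hx
    exact (Real.continuousAt_log (hgpos x hx).ne').comp hgcont.continuousAt
  have hLlin : ∀ x : ℝ, 0 ≤ x → L x = x * L 1 := by
    intro x hx
    set q : ℕ → ℝ := fun n => (Nat.floor (x * ((n : ℝ) + 1)) : ℝ) / ((n : ℝ) + 1) with hqdef
    have hq0 : ∀ n : ℕ, 0 ≤ q n := by
      intro n
      apply div_nonneg (Nat.cast_nonneg _) (by positivity)
    have hqle : ∀ n : ℕ, q n ≤ x := by
      intro n
      have h1 : (Nat.floor (x * ((n : ℝ) + 1)) : ℝ) ≤ x * ((n : ℝ) + 1) :=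
        Nat.floor_le (by positivity)
      show (Nat.floor (x * ((n : ℝ) + 1)) : ℝ) / ((n : ℝ) + 1) ≤ x
      exact (div_le_iff₀ (by positivity)).mpr h1
    have hqge : ∀ n : ℕ, x - ((n : ℝ) + 1)⁻¹ ≤ q n := by
      intro n
      have h1 : x * ((n : ℝ) + 1) < (Nat.floor (x * ((n : ℝ) + 1)) : ℝ) + 1 :=
        Nat.lt_floor_add_one _
      have h2 : (0 : ℝ) < (n : ℝ) + 1 := by positivity
      show x - ((n : ℝ) + 1)⁻¹ ≤ (Nat.floor (x * ((n : ℝ) + 1)) : ℝ) / ((n : ℝ) + 1)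
      rw [le_div_iff₀ h2]
      have h3 : ((n : ℝ) + 1)⁻¹ * ((n : ℝ) + 1) = 1 := inv_mul_cancel₀ h2.ne'
      nlinarith [h1, h3]
    have hqx : Tendsto q atTop (𝓝 x) := by
      have hlower : Tendsto (fun n : ℕ => x - ((n : ℝ) + 1)⁻¹) atTop (𝓝 x) := by
        have hh : Tendsto (fun n : ℕ => x - ((n : ℝ) + 1)⁻¹) atTop (𝓝 (x - 0)) :=
          tendsto_const_nhds.sub hinv_tendsto
        rwa [sub_zero] at hh
      exact tendsto_of_tendsto_of_tendsto_of_le_of_le hlower tendsto_const_nhds hqge hqle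
    have hLq : ∀ n : ℕ, L (q n) = q n * L 1 := by
      intro n
      have h2 := hLnat (n + 1) (q n) (hq0 n)
      have h3 := hLnat (Nat.floor (x * ((n : ℝ) + 1))) 1 zero_le_one
      rw [mul_one] at h3
      have h4 : ((n + 1 : ℕ) : ℝ) * q n = (Nat.floor (x * ((n : ℝ) + 1)) : ℝ) := by
        show ((n + 1 : ℕ) : ℝ) * ((Nat.floor (x * ((n : ℝ) + 1)) : ℝ) / ((n : ℝ) + 1))
          = (Nat.floor (x * ((n : ℝ) + 1)) : ℝ)
        have hpos : ((n : ℝ) + 1) ≠ 0 := by positivity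
        push_cast
        field_simp
      rw [h4, h3] at h2
      have h5 : ((n + 1 : ℕ) : ℝ) ≠ 0 := by positivity
      have h6 : (Nat.floor (x * ((n : ℝ) + 1)) : ℝ) = ((n + 1 : ℕ) : ℝ) * q n := h4.symm
      rw [h6] at h2
      rw [mul_assoc] at h2
      have := mul_left_cancel₀ h5 h2
      linarith [this]
    have hlim1 : Tendsto (fun n => L (q n)) atTop (𝓝 (L x)) :=
      (hLcont x hx).tendsto.comp hqx
    have hlim2 : Tendsto (fun n => q n * L 1) atTop (𝓝 (x * L 1)) := hqx.mul_const _
    exact tendsto_nhds_unique (hlim1.congr fun n => hLq n) hlim2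
  -- conclusion
  have hg1lt : g 1 < 1 := by
    have h2 := hinf 1 one_pos
    have h3 : 0 < μ (Set.Iic 1) := h2.trans_le (measure_mono Set.Iio_subset_Iic_self)
    have h4 : 0 < F 1 := ENNReal.toReal_pos h3.ne' (measure_ne_top μ _)
    have := hgF 1
    linarith
  have hg1pos : 0 < g 1 := hgpos 1 zero_le_one
  have hL1neg : L 1 < 0 := Real.log_neg hg1pos hg1lt
  refine ⟨-L 1, by linarith, ?_⟩
  intro x hx
  have hgx : g x = Real.exp (-(-L 1) * x) := by
    rw [neg_neg, ← Real.exp_log (hgpos x hx.le)]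
    congr 1
    show L x = L 1 * x
    rw [hLlin x hx.le, mul_comm]
  have hFx : F x = 1 - Real.exp (-(-L 1) * x) := by
    have := hgF x
    linarith
  have : μ (Set.Iic x) = ENNReal.ofReal (F x) := (ENNReal.ofReal_toReal (measure_ne_top μ _)).symm
  rw [this, hFx]


end FiszProofAux

/-- **Fisz's characterization of the exponential law.** Let `X` and `Y` be i.i.d.
non-negative random variables with an absolutely continuous distribution whose support
has infimum `0`. If `min (X, Y)` and `|X - Y|` are independent, then there exists
`λ > 0` such that both `X` and `Y` are exponentially distributed with rate `λ`, i.e.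
their distribution function is `F x = 1 - exp (-λ x)` for `x > 0`. -/
theorem fisz_characterization_exponential
    {Ω : Type*} [MeasureSpace Ω] [IsProbabilityMeasure (ℙ : Measure Ω)]
    (X Y : Ω → ℝ) (hX : Measurable X) (hY : Measurable Y)
    (hindep : IndepFun X Y ℙ) (hid : Measure.map Y ℙ = Measure.map X ℙ)
    (hpos : ∀ᵐ ω ∂ℙ, 0 ≤ X ω)
    (hac : Measure.map X ℙ ≪ (volume : Measure ℝ))
    (hinf : ∀ ε : ℝ, 0 < ε → 0 < ℙ {ω | X ω < ε})
    (hmin_range_indep :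
      IndepFun (fun ω => min (X ω) (Y ω)) (fun ω => |X ω - Y ω|) ℙ) :
    ∃ l : ℝ, 0 < l ∧ ∀ x : ℝ, 0 < x →
      (Measure.map X ℙ) (Set.Iic x) = ENNReal.ofReal (1 - Real.exp (-l * x)) ∧
      (Measure.map Y ℙ) (Set.Iic x) = ENNReal.ofReal (1 - Real.exp (-l * x)) := by
  set μ : Measure ℝ := Measure.map X ℙ with hμ
  haveI : IsProbabilityMeasure μ := Measure.isProbabilityMeasure_map hX.aemeasurable
  have hXY : Measurable fun ω => (X ω, Y ω) := hX.prodMk hY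
  have hmap : Measure.map (fun ω => (X ω, Y ω)) ℙ = μ.prod μ := by
    have h := (indepFun_iff_map_prod_eq_prod_map_map hX.aemeasurable hY.aemeasurable).mp hindep
    rw [h, hid]
  have h0 : μ (Set.Iic 0) = 0 := by
    have hIio : μ (Set.Iio 0) = 0 := by
      rw [hμ, Measure.map_apply hX measurableSet_Iio]
      have h1 : ℙ {ω | ¬ (0 ≤ X ω)} = 0 := ae_iff.mp hpos
      have h2 : X ⁻¹' (Set.Iio 0) = {ω | ¬ (0 ≤ X ω)} := by
        ext ω; simp [not_le]
      rw [h2]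
      exact h1
    have hsing : μ {(0 : ℝ)} = 0 := hac Real.volume_singleton
    have hsub : Set.Iic (0:ℝ) ⊆ Set.Iio 0 ∪ {0} := by
      intro x hx
      rcases lt_or_eq_of_le (Set.mem_Iic.mp hx) with h | h
      · exact Or.inl h
      · exact Or.inr (by simp [h])
    have := (measure_mono (μ := μ) hsub).trans (measure_union_le _ _)
    rw [hIio, hsing, add_zero] at this
    exact le_zero_iff.mp this
  have hinf' : ∀ ε : ℝ, 0 < ε → 0 < μ (Set.Iio ε) := by
    intro ε hε
    rw [hμ, Measure.map_apply hX measurableSet_Iio]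
    exact hinf ε hε
  have hfe : ∀ s t : ℝ, 0 ≤ t →
      (μ.prod μ) {z : ℝ × ℝ | s < min z.1 z.2 ∧ t < |z.1 - z.2|}
        = μ (Set.Ioi s) * μ (Set.Ioi s) * (μ.prod μ) {z : ℝ × ℝ | t < |z.1 - z.2|} := by
    intro s t ht
    have hS1 : MeasurableSet {z : ℝ × ℝ | s < min z.1 z.2} :=
      measurableSet_lt measurable_const (measurable_fst.min measurable_snd)
    have hS2 : MeasurableSet {z : ℝ × ℝ | t < |z.1 - z.2|} :=
      measurableSet_lt measurable_const (measurable_fst.sub measurable_snd).abs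
    have hBig : MeasurableSet {z : ℝ × ℝ | s < min z.1 z.2 ∧ t < |z.1 - z.2|} :=
      hS1.inter hS2
    have hI := hmin_range_indep.measure_inter_preimage_eq_mul
      (s := Set.Ioi s) (t := Set.Ioi t) measurableSet_Ioi measurableSet_Ioi
    have e1 : (fun ω => min (X ω) (Y ω)) ⁻¹' (Set.Ioi s) ∩ (fun ω => |X ω - Y ω|) ⁻¹' (Set.Ioi t)
        = (fun ω => (X ω, Y ω)) ⁻¹' {z : ℝ × ℝ | s < min z.1 z.2 ∧ t < |z.1 - z.2|} := rfl
    have e2 : (fun ω => min (X ω) (Y ω)) ⁻¹' (Set.Ioi s)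
        = (fun ω => (X ω, Y ω)) ⁻¹' {z : ℝ × ℝ | s < min z.1 z.2} := rfl
    have e3 : (fun ω => |X ω - Y ω|) ⁻¹' (Set.Ioi t)
        = (fun ω => (X ω, Y ω)) ⁻¹' {z : ℝ × ℝ | t < |z.1 - z.2|} := rfl
    rw [e1, e2, e3] at hI
    have c1 : (μ.prod μ) {z : ℝ × ℝ | s < min z.1 z.2 ∧ t < |z.1 - z.2|}
        = ℙ ((fun ω => (X ω, Y ω)) ⁻¹' {z : ℝ × ℝ | s < min z.1 z.2 ∧ t < |z.1 - z.2|}) := by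
      rw [← hmap, Measure.map_apply hXY hBig]
    have c2 : (μ.prod μ) {z : ℝ × ℝ | t < |z.1 - z.2|}
        = ℙ ((fun ω => (X ω, Y ω)) ⁻¹' {z : ℝ × ℝ | t < |z.1 - z.2|}) := by
      rw [← hmap, Measure.map_apply hXY hS2]
    have c3 : μ (Set.Ioi s) * μ (Set.Ioi s)
        = ℙ ((fun ω => (X ω, Y ω)) ⁻¹' {z : ℝ × ℝ | s < min z.1 z.2}) := by
      have hprod : {z : ℝ × ℝ | s < min z.1 z.2} = (Set.Ioi s) ×ˢ (Set.Ioi s) := by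
        ext z
        simp [Set.mem_prod, lt_min_iff]
      rw [← Measure.prod_prod, ← hprod, ← hmap, Measure.map_apply hXY hS1]
    rw [c1, c2, c3, hI]
  obtain ⟨l, hl, hform⟩ := FiszProofAux.fisz_aux μ hac h0 hinf' hfe
  refine ⟨l, hl, fun x hx => ⟨hform x hx, ?_⟩⟩
  rw [hid]
  exact hform x hx
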